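/- Let m > 0, g ∈ ℝ, and Fx, Fy, Fz ∈ ℝ, and set ℑ := m √(Fx² + Fy² + (Fz + g)²). Assume ℑ + m(g + Fz) > 0, and define q₀d := √( m(g + Fz)/(2ℑ) + 1/2 ), q₁d := −m Fy / (2 ℑ q₀d), q₂d := m Fx / (2 ℑ q₀d), q₃d := 0. Then ℑ · (q₀d² − q₁d² − q₂d² + q₃d²) = m (g + Fz). -/

import Mathlib

/-- **Vertical thrust identity for the desired quaternion (equations (22)–(24)).**
The desired quaternion of equation (24) reproduces the commanded vertical thrust
component: `ℑ (q₀d² − q₁d² − q₂d² + q₃d²) = m(g + Fz)`. -/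
theorem desired_quaternion_vertical_thrust (m g Fx Fy Fz : ℝ) (hm : 0 < m)
    (T : ℝ) (hT : T = m * Real.sqrt (Fx ^ 2 + Fy ^ 2 + (Fz + g) ^ 2))
    (hpos : 0 < T + m * (g + Fz))
    (q0d q1d q2d q3d : ℝ)
    (hq0d : q0d = Real.sqrt (m * (g + Fz) / (2 * T) + 1 / 2))
    (hq1d : q1d = -(m * Fy) / (2 * T * q0d))
    (hq2d : q2d = m * Fx / (2 * T * q0d))
    (hq3d : q3d = 0) :
    T * (q0d ^ 2 - q1d ^ 2 - q2d ^ 2 + q3d ^ 2) = m * (g + Fz) := by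
  have hS : (0:ℝ) ≤ Fx ^ 2 + Fy ^ 2 + (Fz + g) ^ 2 := by positivity
  have hsq : Fz + g ≤ Real.sqrt (Fx ^ 2 + Fy ^ 2 + (Fz + g) ^ 2) := by
    calc Fz + g ≤ |Fz + g| := le_abs_self _
      _ = Real.sqrt ((Fz + g) ^ 2) := (Real.sqrt_sq_eq_abs _).symm
      _ ≤ _ := Real.sqrt_le_sqrt (by nlinarith)
  have hTA : m * (g + Fz) ≤ T := by
    rw [hT]; nlinarith
  have hTpos : 0 < T := by linarith
  have hT2 : T ^ 2 = m ^ 2 * (Fx ^ 2 + Fy ^ 2 + (Fz + g) ^ 2) := by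
    rw [hT, mul_pow, Real.sq_sqrt hS]
  have hx : m * (g + Fz) / (2 * T) + 1 / 2 = (T + m * (g + Fz)) / (2 * T) := by
    field_simp; ring
  have hxpos : 0 < m * (g + Fz) / (2 * T) + 1 / 2 := by
    rw [hx]; positivity
  have hq0sq : q0d ^ 2 = m * (g + Fz) / (2 * T) + 1 / 2 := by
    rw [hq0d, Real.sq_sqrt hxpos.le]
  have hq0pos : 0 < q0d := by
    rw [hq0d]; exact Real.sqrt_pos.mpr hxpos
  have h2 : 2 * T * q0d ^ 2 = T + m * (g + Fz) := by
    rw [hq0sq, hx]; field_simp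
  rw [hq1d, hq2d, hq3d]
  field_simp
  linear_combination (2 * T * q0d ^ 2 - m * (g + Fz) + T) * h2 + hT2
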